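/- Let f : [0,1] → [0,1] be defined by f(x) = 2x/(x+1), with n-th iterate fⁿ(x) = 2ⁿx/((2ⁿ − 1)x + 1). Then for all x, y ∈ [1/2, 2/3] and every n ≥ 0, |fⁿ(x) − fⁿ(y)| = 2ⁿ|x − y| / ([(2ⁿ−1)x + 1]·[(2ⁿ−1)y + 1]), and in particular |fⁿ(x) − fⁿ(y)| ≤ 2^{−n}. -/

import Mathlib

lemma iter_formula (f : ℝ → ℝ) (hf : f = fun x => 2 * x / (x + 1)) :
    ∀ n : ℕ, ∀ x : ℝ, 0 < x →
      f^[n] x = 2 ^ n * x / ((2 ^ n - 1) * x + 1) := by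
  intro n
  induction n with
  | zero => intro x hx; simp
  | succ n ih =>
    intro x hx
    have hx1 : (0:ℝ) < x + 1 := by linarith
    have hfx : f x = 2 * x / (x + 1) := by rw [hf]
    have hfxpos : 0 < f x := by
      rw [hfx]; positivity
    rw [Function.iterate_succ_apply, ih (f x) hfxpos, hfx]
    have hpow : (1:ℝ) ≤ 2 ^ n := one_le_pow₀ (by norm_num)
    have hden : (0:ℝ) < (2 ^ (n+1) - 1) * x + 1 := by
      have : (0:ℝ) ≤ (2 ^ (n+1) - 1) * x := by
        apply mul_nonneg _ hx.le
        have : (1:ℝ) ≤ 2 ^ (n+1) := one_le_pow₀ (by norm_num)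
        linarith
      linarith
    have hden2 : (2:ℝ) ^ n - 1 ≥ 0 := by linarith
    have hden3 : (0:ℝ) < (2 ^ n - 1) * (2 * x / (x + 1)) + 1 := by
      have : (0:ℝ) ≤ (2 ^ n - 1) * (2 * x / (x + 1)) := by positivity
      linarith
    rw [div_eq_div_iff hden3.ne' hden.ne']
    field_simp
    ring

theorem iterate_contraction_on_fundamental_domain
    (f : ℝ → ℝ) (hf : f = fun x => 2 * x / (x + 1)) :
    ∀ n : ℕ, ∀ x ∈ Set.Icc (1/2 : ℝ) (2/3), ∀ y ∈ Set.Icc (1/2 : ℝ) (2/3),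
      |f^[n] x - f^[n] y| =
        2 ^ n * |x - y| / (((2 ^ n - 1) * x + 1) * ((2 ^ n - 1) * y + 1)) ∧
      |f^[n] x - f^[n] y| ≤ 1 / 2 ^ n := by
  intro n x hx y hy
  obtain ⟨hx1, hx2⟩ := hx
  obtain ⟨hy1, hy2⟩ := hy
  have hxp : (0:ℝ) < x := by linarith
  have hyp : (0:ℝ) < y := by linarith
  have hpow : (1:ℝ) ≤ 2 ^ n := one_le_pow₀ (by norm_num)
  have hax : (0:ℝ) < (2 ^ n - 1) * x + 1 := by nlinarith
  have hay : (0:ℝ) < (2 ^ n - 1) * y + 1 := by nlinarith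
  have hdiff : f^[n] x - f^[n] y =
      2 ^ n * (x - y) / (((2 ^ n - 1) * x + 1) * ((2 ^ n - 1) * y + 1)) := by
    rw [iter_formula f hf n x hxp, iter_formula f hf n y hyp]
    rw [div_sub_div _ _ hax.ne' hay.ne']
    congr 1
    ring
  have heq : |f^[n] x - f^[n] y| =
      2 ^ n * |x - y| / (((2 ^ n - 1) * x + 1) * ((2 ^ n - 1) * y + 1)) := by
    rw [hdiff, abs_div, abs_mul]
    rw [abs_of_pos (by positivity : (0:ℝ) < ((2 ^ n - 1) * x + 1) * ((2 ^ n - 1) * y + 1))]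
    rw [abs_of_pos (by positivity : (0:ℝ) < (2:ℝ) ^ n)]
  refine ⟨heq, ?_⟩
  rw [heq]
  rw [div_le_div_iff₀ (by positivity) (by positivity)]
  have habs : |x - y| ≤ 1/6 := by rw [abs_sub_le_iff]; constructor <;> linarith
  have haxl : (2 ^ n + 1) / 2 ≤ (2 ^ n - 1) * x + 1 := by nlinarith
  have hayl : (2 ^ n + 1) / 2 ≤ (2 ^ n - 1) * y + 1 := by nlinarith
  nlinarith [sq_nonneg ((2:ℝ)^n - 1), abs_nonneg (x - y), mul_le_mul haxl hayl (by positivity) hax.le]
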